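/- Let 𝒞 be a set of n unit vectors in ℝ^r whose pairwise inner products are all at most α, with 0 ≤ α < 1, and let M be the Gram matrix of 𝒞. Then tr(M²) ≤ 2n + α²n² + (27/4)(1 + αn)² αn. -/

import Mathlib

open Finset

private lemma algA (α S γ : ℝ) (h : S^2 ≤ S + α*γ^2) : S ≤ 1 + α*γ^2 := by
  nlinarith [sq_nonneg (S-1)]

private lemma algB (n β α D g G : ℝ) (hn : 0 ≤ n) (hβ1 : 1 ≤ β) (hβ : β = 1 + α*n)
    (hα : 0 ≤ α) (hG : 0 ≤ G) (hD0 : 0 ≤ D) (hD : D ≤ β*g) (hg0 : 0 ≤ g) (hg : g ≤ n*β)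
    (h : (D - G)^2 ≤ n*β*(G + α*g^2)) : G ≤ 3*n*β^2 := by
  have hnb2 : 0 ≤ n*β^2 := by positivity
  rcases le_or_gt G (n*β^2) with hcase | hcase
  · linarith
  · have hDnb : D ≤ n*β^2 := by nlinarith
    have h2 : (G - n*β^2)^2 ≤ (D - G)^2 := by nlinarith
    have hgg : g*g ≤ (n*β)*(n*β) := mul_self_le_mul_self hg0 hg
    have h3 : α*g^2 ≤ (β-1)*n*(β^2) := by nlinarith
    have hnb : 0 ≤ n*β := by positivity
    have h4a : n*β*(α*g^2) ≤ n*β*((β-1)*n*(β^2)) := mul_le_mul_of_nonneg_left h3 hnb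
    have h4b : n*β*((β-1)*n*(β^2)) ≤ n^2*β^4 := by
      nlinarith [mul_nonneg (mul_nonneg hn hn) (pow_nonneg (by linarith : (0:ℝ) ≤ β) 3)]
    have h4c : n*β*G ≤ n*β^2*G := by
      nlinarith [mul_nonneg (mul_nonneg hn hG) (by nlinarith : (0:ℝ) ≤ β^2 - β)]
    have h5 : (G - n*β^2)^2 ≤ n*β^2*G + n^2*β^4 := by nlinarith
    nlinarith [h5, hcase, hnb2]

theorem trace_gram_sq_bound {d n : ℕ} (α : ℝ) (hα0 : 0 ≤ α) (hα1 : α < 1)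
    (v : Fin n → EuclideanSpace ℝ (Fin d))
    (hunit : ∀ i, ‖v i‖ = 1)
    (hpair : ∀ i j, i ≠ j → (inner ℝ (v i) (v j) : ℝ) ≤ α)
    (M : Matrix (Fin n) (Fin n) ℝ)
    (hM : ∀ i j, M i j = (inner ℝ (v i) (v j) : ℝ)) :
    Matrix.trace (M * M) ≤ 2 * n + α ^ 2 * n ^ 2 + 27 / 4 * (1 + α * n) ^ 2 * (α * n) := by
  classical
  set X : Fin n → Fin n → ℝ := fun i j => inner ℝ (v i) (v j) with hX
  have hXd : ∀ i, X i i = 1 := by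
    intro i
    show (inner ℝ (v i) (v i) : ℝ) = 1
    rw [real_inner_self_eq_norm_sq, hunit i]; norm_num
  have hXs : ∀ i j, X i j = X j i := fun i j => real_inner_comm _ _
  have hXα : ∀ i j, i ≠ j → X i j ≤ α := hpair
  set c : Fin n → Fin n → ℝ := fun i j => max (-(X i j)) 0 with hc
  set p : Fin n → Fin n → ℝ := fun i j => max (X i j) 0 with hp
  have hc0 : ∀ i j, 0 ≤ c i j := fun i j => le_max_right _ _
  have hp0 : ∀ i j, 0 ≤ p i j := fun i j => le_max_right _ _
  have hpc : ∀ i j, p i j - c i j = X i j := by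
    intro i j; show max (X i j) 0 - max (-(X i j)) 0 = X i j
    rcases le_total (X i j) 0 with h | h
    · rw [max_eq_right h, max_eq_left (by linarith)]; ring
    · rw [max_eq_left h, max_eq_right (by linarith)]; ring
  have hcx : ∀ i j, c i j * X i j = -(c i j)^2 := by
    intro i j; show max (-(X i j)) 0 * X i j = -(max (-(X i j)) 0)^2
    rcases le_total (X i j) 0 with h | h
    · rw [max_eq_left (by linarith)]; ring
    · rw [max_eq_right (by linarith)]; ring
  have hx2 : ∀ i j, (X i j)^2 = (p i j)^2 + (c i j)^2 := by
    intro i j; show (X i j)^2 = (max (X i j) 0)^2 + (max (-(X i j)) 0)^2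
    rcases le_total (X i j) 0 with h | h
    · rw [max_eq_right h, max_eq_left (by linarith)]; ring
    · rw [max_eq_left h, max_eq_right (by linarith)]; ring
  have hpii : ∀ i, p i i = 1 := by
    intro i; show max (X i i) 0 = 1; rw [hXd i]; norm_num
  have hpα : ∀ i j, i ≠ j → p i j ≤ α := by
    intro i j hij; exact max_le (hXα i j hij) hα0
  set γ : Fin n → ℝ := fun i => ∑ j, c i j with hγ
  set P : Fin n → ℝ := fun i => ∑ j, p i j with hP
  set S : Fin n → ℝ := fun i => ∑ j, (c i j)^2 with hS
  set β : ℝ := 1 + α * n with hβ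
  have hn0 : (0:ℝ) ≤ n := Nat.cast_nonneg n
  have hβ1 : 1 ≤ β := by rw [hβ]; nlinarith
  have hγ0 : ∀ i, 0 ≤ γ i := fun i => Finset.sum_nonneg fun j _ => hc0 i j
  have hP0 : ∀ i, 0 ≤ P i := fun i => Finset.sum_nonneg fun j _ => hp0 i j
  have hcard : ∀ i : Fin n, ((Finset.univ.erase i).card : ℝ) ≤ n := by
    intro i
    have h1 := Finset.card_erase_le (s := (Finset.univ : Finset (Fin n))) (a := i)
    have h2 : (Finset.univ : Finset (Fin n)).card = n := by simp
    exact_mod_cast le_trans h1 (le_of_eq h2)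
  have hPβ : ∀ i, P i ≤ β := by
    intro i
    have h1 : P i = 1 + ∑ j ∈ Finset.univ.erase i, p i j := by
      simp only [hP]; rw [← Finset.add_sum_erase _ _ (Finset.mem_univ i), hpii]
    have h2 : ∑ j ∈ Finset.univ.erase i, p i j ≤ ∑ _j ∈ Finset.univ.erase i, α :=
      Finset.sum_le_sum fun j hj => hpα i j (Ne.symm (Finset.ne_of_mem_erase hj))
    have h3 : ∑ _j ∈ Finset.univ.erase i, α = (Finset.univ.erase i).card * α := by
      rw [Finset.sum_const, nsmul_eq_mul]
    rw [h1, hβ]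
    nlinarith [mul_le_mul_of_nonneg_right (hcard i) hα0]
  -- key quadratic form bound
  have key : ∀ a : Fin n → ℝ, (∀ i, 0 ≤ a i) →
      (inner ℝ (∑ i, a i • v i) (∑ i, a i • v i) : ℝ) ≤ (∑ i, (a i)^2) + α * (∑ i, a i)^2 := by
    intro a ha
    have hexp : (inner ℝ (∑ i, a i • v i) (∑ i, a i • v i) : ℝ)
        = ∑ i, ∑ j, a i * (a j * (inner ℝ (v i) (v j) : ℝ)) := by
      rw [sum_inner]
      refine Finset.sum_congr rfl fun i _ => ?_
      rw [real_inner_smul_left, inner_sum]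
      rw [Finset.mul_sum]
      refine Finset.sum_congr rfl fun j _ => ?_
      rw [real_inner_smul_right]
    rw [hexp]
    have hterm : ∀ i j, a i * (a j * (inner ℝ (v i) (v j) : ℝ))
        ≤ (if i = j then (1-α) * (a i)^2 else 0) + α * (a i * a j) := by
      intro i j
      by_cases hij : i = j
      · subst hij
        have h1 : (inner ℝ (v i) (v i) : ℝ) = 1 := hXd i
        rw [if_pos rfl, h1]
        exact le_of_eq (by ring)
      · simp only [if_neg hij]
        have h1 : (inner ℝ (v i) (v j) : ℝ) ≤ α := hXα i j hij
        nlinarith [mul_nonneg (ha i) (ha j)]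
    calc ∑ i, ∑ j, a i * (a j * (inner ℝ (v i) (v j) : ℝ))
        ≤ ∑ i, ∑ j, ((if i = j then (1-α) * (a i)^2 else 0) + α * (a i * a j)) :=
          Finset.sum_le_sum fun i _ => Finset.sum_le_sum fun j _ => hterm i j
      _ = (1-α) * (∑ i, (a i)^2) + α * (∑ i, a i)^2 := by
          simp only [Finset.sum_add_distrib, Finset.sum_ite_eq, Finset.mem_univ, if_true]
          have e1 : ∑ x : Fin n, ∑ y : Fin n, α*(a x * a y)
              = α * ((∑ x, a x) * (∑ y, a y)) := by
            rw [Finset.sum_mul_sum, Finset.mul_sum]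
            refine Finset.sum_congr rfl fun x _ => ?_
            rw [Finset.mul_sum]
          rw [e1, ← Finset.mul_sum, sq]
      _ ≤ (∑ i, (a i)^2) + α * (∑ i, a i)^2 := by
          have h9 : 0 ≤ ∑ i, (a i)^2 := Finset.sum_nonneg fun i _ => sq_nonneg _
          nlinarith [mul_nonneg hα0 h9]
  -- per-vertex lemma
  have hSA : ∀ i, S i ≤ 1 + α * (γ i)^2 := by
    intro i
    have h1 : (inner ℝ (v i) (∑ j, c i j • v j) : ℝ) = -(S i) := by
      rw [inner_sum]
      have : ∀ j, (inner ℝ (v i) (c i j • v j) : ℝ) = -(c i j)^2 := by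
        intro j
        rw [real_inner_smul_right]
        exact hcx i j
      rw [Finset.sum_congr rfl fun j _ => this j]
      simp only [hS, Finset.sum_neg_distrib]
    have h2 := key (c i) (hc0 i)
    have h3 := real_inner_mul_inner_self_le (v i) (∑ j, c i j • v j)
    have h4 : (inner ℝ (v i) (v i) : ℝ) = 1 := hXd i
    rw [h1, h4] at h3
    have h5 : (0:ℝ) ≤ inner ℝ (∑ j, c i j • v j) (∑ j, c i j • v j) := real_inner_self_nonneg
    refine algA α (S i) (γ i) ?_
    have h6 : (∑ j, (c i j)^2) = S i := rfl
    have h7 : (∑ j, c i j) = γ i := rfl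
    rw [h6, h7] at h2
    nlinarith
  -- global lemma
  set G : ℝ := ∑ i, (γ i)^2 with hG
  set g : ℝ := ∑ i, γ i with hg
  set D : ℝ := ∑ i, γ i * P i with hD
  have hG0 : 0 ≤ G := Finset.sum_nonneg fun i _ => sq_nonneg _
  have hg0 : 0 ≤ g := Finset.sum_nonneg fun i _ => hγ0 i
  have hD0 : 0 ≤ D := Finset.sum_nonneg fun i _ => mul_nonneg (hγ0 i) (hP0 i)
  have hDβ : D ≤ β * g := by
    have h1 : ∀ i, γ i * P i ≤ γ i * β := fun i => mul_le_mul_of_nonneg_left (hPβ i) (hγ0 i)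
    calc D ≤ ∑ i, γ i * β := Finset.sum_le_sum fun i _ => h1 i
      _ = β * g := by rw [hg, Finset.mul_sum]; exact Finset.sum_congr rfl fun i _ => mul_comm _ _
  have hrow : ∀ i, ∑ j, (inner ℝ (v i) (v j) : ℝ) = P i - γ i := by
    intro i
    have h1 : ∀ j, (inner ℝ (v i) (v j) : ℝ) = p i j - c i j := fun j => (hpc i j).symm
    rw [Finset.sum_congr rfl fun j _ => h1 j, Finset.sum_sub_distrib]
  have hss_expand : (inner ℝ (∑ j, v j) (∑ j, v j) : ℝ) = ∑ i, (P i - γ i) := by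
    rw [sum_inner]
    refine Finset.sum_congr rfl fun i _ => ?_
    rw [inner_sum]
    exact hrow i
  have hsumP : ∑ i, P i ≤ n * β := by
    calc ∑ i, P i ≤ ∑ _i : Fin n, β := Finset.sum_le_sum fun i _ => hPβ i
      _ = n * β := by rw [Finset.sum_const, nsmul_eq_mul]; simp
  have hss0 : (0:ℝ) ≤ inner ℝ (∑ j, v j) (∑ j, v j) := real_inner_self_nonneg
  have hss_le : (inner ℝ (∑ j, v j) (∑ j, v j) : ℝ) ≤ n * β := by
    rw [hss_expand]
    calc ∑ i, (P i - γ i) ≤ ∑ i, P i := Finset.sum_le_sum fun i _ => by linarith [hγ0 i]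
      _ ≤ n * β := hsumP
  have hg_le : g ≤ n * β := by
    have h1 : ∑ i, (P i - γ i) = (∑ i, P i) - g := by rw [hg, Finset.sum_sub_distrib]
    rw [hss_expand, h1] at hss0
    linarith
  have hzs : (inner ℝ (∑ i, γ i • v i) (∑ j, v j) : ℝ) = D - G := by
    rw [sum_inner]
    have h1 : ∀ i, (inner ℝ (γ i • v i) (∑ j, v j) : ℝ) = γ i * (P i - γ i) := by
      intro i
      rw [real_inner_smul_left, inner_sum, hrow i]
    rw [Finset.sum_congr rfl fun i _ => h1 i]
    rw [hD, hG, ← Finset.sum_sub_distrib]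
    exact Finset.sum_congr rfl fun i _ => by ring
  have hzz : (inner ℝ (∑ i, γ i • v i) (∑ i, γ i • v i) : ℝ) ≤ G + α * g^2 := key γ hγ0
  have hzz0 : (0:ℝ) ≤ inner ℝ (∑ i, γ i • v i) (∑ i, γ i • v i) := real_inner_self_nonneg
  have hCS := real_inner_mul_inner_self_le (∑ i, γ i • v i) (∑ j, v j)
  rw [hzs] at hCS
  have hGag : (0:ℝ) ≤ G + α * g^2 := by positivity
  have hCS2 : (D - G)^2 ≤ (n*β) * (G + α*g^2) := by
    have h1 : (inner ℝ (∑ i, γ i • v i) (∑ i, γ i • v i) : ℝ)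
        * (inner ℝ (∑ j, v j) (∑ j, v j) : ℝ) ≤ (G + α*g^2) * (n*β) :=
      mul_le_mul hzz hss_le hss0 hGag
    calc (D - G)^2 = (D - G) * (D - G) := by ring
      _ ≤ (G + α*g^2) * (n*β) := le_trans hCS h1
      _ = (n*β) * (G + α*g^2) := mul_comm _ _
  have hGb : G ≤ 3 * n * β^2 := by
    have := algB n β α D g G hn0 hβ1 hβ hα0 hG0 hD0 hDβ hg0 hg_le
      (by rw [show (n:ℝ)*β*(G + α*g^2) = (n*β)*(G + α*g^2) by ring]; exact hCS2)
    linarith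
  -- final assembly
  have htr : Matrix.trace (M * M) = ∑ i, ∑ j, (X i j)^2 := by
    simp only [Matrix.trace, Matrix.diag_apply, Matrix.mul_apply]
    refine Finset.sum_congr rfl fun i _ => ?_
    refine Finset.sum_congr rfl fun j _ => ?_
    rw [hM i j, hM j i]
    have h1 : (inner ℝ (v j) (v i) : ℝ) = X i j := (hXs i j).symm
    have h2 : (inner ℝ (v i) (v j) : ℝ) = X i j := rfl
    rw [h1, h2, sq]
  have hppart : ∀ i, ∑ j, (p i j)^2 ≤ 1 + α^2 * n := by
    intro i
    have h1 : ∑ j, (p i j)^2 = 1 + ∑ j ∈ Finset.univ.erase i, (p i j)^2 := by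
      rw [← Finset.add_sum_erase _ _ (Finset.mem_univ i), hpii]; norm_num
    have h2 : ∑ j ∈ Finset.univ.erase i, (p i j)^2 ≤ ∑ _j ∈ Finset.univ.erase i, α^2 := by
      refine Finset.sum_le_sum fun j hj => ?_
      have h9 := hpα i j (Ne.symm (Finset.ne_of_mem_erase hj))
      exact pow_le_pow_left₀ (hp0 i j) h9 2
    have h3 : ∑ _j ∈ Finset.univ.erase i, α^2 = (Finset.univ.erase i).card * α^2 := by
      rw [Finset.sum_const, nsmul_eq_mul]
    rw [h1]
    linarith [h2, h3, mul_le_mul_of_nonneg_right (hcard i) (sq_nonneg α)]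
  have hsplit : ∑ i, ∑ j, (X i j)^2 = (∑ i, ∑ j, (p i j)^2) + ∑ i, S i := by
    rw [← Finset.sum_add_distrib]
    refine Finset.sum_congr rfl fun i _ => ?_
    rw [hS, ← Finset.sum_add_distrib]
    exact Finset.sum_congr rfl fun j _ => hx2 i j
  have hpsum : ∑ i, ∑ j, (p i j)^2 ≤ n * (1 + α^2 * n) := by
    calc ∑ i, ∑ j, (p i j)^2 ≤ ∑ _i : Fin n, (1 + α^2 * n) :=
          Finset.sum_le_sum fun i _ => hppart i
      _ = n * (1 + α^2 * n) := by rw [Finset.sum_const, nsmul_eq_mul]; simp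
  have hSsum : ∑ i, S i ≤ n + α * G := by
    calc ∑ i, S i ≤ ∑ i, (1 + α * (γ i)^2) := Finset.sum_le_sum fun i _ => hSA i
      _ = n + α * G := by
          rw [Finset.sum_add_distrib, hG, Finset.mul_sum]
          simp
  rw [htr, hsplit]
  have hfin : α * G ≤ α * (3 * n * β^2) := mul_le_mul_of_nonneg_left hGb hα0
  have hβ2 : (0:ℝ) ≤ α * n * β^2 := mul_nonneg (mul_nonneg hα0 hn0) (sq_nonneg β)
  clear_value X c p γ P S β G g D
  linarith [hpsum, hSsum, hfin, hβ2]
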